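/- Weak duality: Let G = (V,E) be a finite graph with a scale 𝒮 = {S_i}_{i∈V}. Suppose (ξ_i)_{i∈V} are probability measures on V with supp ξ_i ⊂ S_i and ‖ξ_i − ξ_j‖_1 ≤ ε for every edge ij. Suppose κ : E → ℝ≥0 with ∑_{e} κ(e) ≤ 1, η : V → ℝ, and for each k ∈ V a pseudo-flow φ_k : E → ℝ with |φ_k(e)| ≤ κ(e) for all e, such that for every k ∈ V and every i with k ∈ S_i, the net supply of φ_k at i is at least η_i. Then ∑_{i∈V} η_i ≤ ε. -/

import Mathlib

/-- Weak duality: given probability measures `ξ_i` supported in `S_i` with variation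
at most `ε ≥ 0` on each edge, and pseudo-flows `φ_k` bounded by a capacity `κ` of total
capacity at most `1` whose net supply at each `i` with `k ∈ S_i` is at least `η_i`,
we have `∑_i η_i ≤ ε`. -/
theorem stmt6 {V : Type*} [Fintype V] [DecidableEq V]
    (E : Finset (V × V)) (hE : ∀ e ∈ E, e.1 ≠ e.2)
    (S : V → Finset V) (ε : ℝ) (hε : 0 ≤ ε)
    (ξ : V → V → ℝ)
    (hpos : ∀ i j, 0 ≤ ξ i j)
    (hsum : ∀ i, ∑ j, ξ i j = 1)
    (hsupp : ∀ i j, ξ i j ≠ 0 → j ∈ S i)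
    (hvar : ∀ e ∈ E, ∑ k, |ξ e.1 k - ξ e.2 k| ≤ ε)
    (κ : V × V → ℝ) (hκ0 : ∀ e, 0 ≤ κ e) (hκ1 : ∑ e ∈ E, κ e ≤ 1)
    (η : V → ℝ) (φ : V → V × V → ℝ)
    (hφ : ∀ k, ∀ e ∈ E, |φ k e| ≤ κ e)
    (hsupply : ∀ k i, k ∈ S i →
      η i ≤ (∑ e ∈ E.filter fun e => e.2 = i, φ k e)
        - ∑ e ∈ E.filter fun e => e.1 = i, φ k e) :
    ∑ i, η i ≤ ε := by
  have key : ∀ i, η i ≤ ∑ k, ξ i k * ((∑ e ∈ E.filter fun e => e.2 = i, φ k e)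
      - ∑ e ∈ E.filter fun e => e.1 = i, φ k e) := by
    intro i
    calc η i = ∑ k : V, ξ i k * η i := by rw [← Finset.sum_mul, hsum, one_mul]
      _ ≤ _ := by
          apply Finset.sum_le_sum
          intro k _
          by_cases h : ξ i k = 0
          · simp [h]
          · exact mul_le_mul_of_nonneg_left (hsupply k i (hsupp i k h)) (hpos i k)
  have h2 : ∀ k, ∑ i, ξ i k * ∑ e ∈ E.filter (fun e => e.2 = i), φ k e
      = ∑ e ∈ E, ξ e.2 k * φ k e := by
    intro k
    rw [← Finset.sum_fiberwise E (fun e => e.2) (fun e => ξ e.2 k * φ k e)]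
    refine Finset.sum_congr rfl fun i _ => ?_
    rw [Finset.mul_sum]
    refine Finset.sum_congr rfl fun e he => ?_
    rw [(Finset.mem_filter.mp he).2]
  have h1 : ∀ k, ∑ i, ξ i k * ∑ e ∈ E.filter (fun e => e.1 = i), φ k e
      = ∑ e ∈ E, ξ e.1 k * φ k e := by
    intro k
    rw [← Finset.sum_fiberwise E (fun e => e.1) (fun e => ξ e.1 k * φ k e)]
    refine Finset.sum_congr rfl fun i _ => ?_
    rw [Finset.mul_sum]
    refine Finset.sum_congr rfl fun e he => ?_
    rw [(Finset.mem_filter.mp he).2]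
  calc ∑ i, η i
      ≤ ∑ i, ∑ k, ξ i k * ((∑ e ∈ E.filter fun e => e.2 = i, φ k e)
          - ∑ e ∈ E.filter fun e => e.1 = i, φ k e) :=
        Finset.sum_le_sum fun i _ => key i
    _ = ∑ k, ∑ e ∈ E, φ k e * (ξ e.2 k - ξ e.1 k) := by
        rw [Finset.sum_comm]
        refine Finset.sum_congr rfl fun k _ => ?_
        simp only [mul_sub]
        rw [Finset.sum_sub_distrib, h2 k, h1 k, ← Finset.sum_sub_distrib]
        exact Finset.sum_congr rfl fun e _ => by ring
    _ ≤ ∑ k, ∑ e ∈ E, κ e * |ξ e.2 k - ξ e.1 k| := by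
        refine Finset.sum_le_sum fun k _ => Finset.sum_le_sum fun e he => ?_
        calc φ k e * (ξ e.2 k - ξ e.1 k) ≤ |φ k e * (ξ e.2 k - ξ e.1 k)| := le_abs_self _
          _ = |φ k e| * |ξ e.2 k - ξ e.1 k| := abs_mul _ _
          _ ≤ κ e * |ξ e.2 k - ξ e.1 k| :=
              mul_le_mul_of_nonneg_right (hφ k e he) (abs_nonneg _)
    _ = ∑ e ∈ E, κ e * ∑ k, |ξ e.2 k - ξ e.1 k| := by
        rw [Finset.sum_comm]
        exact Finset.sum_congr rfl fun e _ => (Finset.mul_sum _ _ _).symm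
    _ ≤ ∑ e ∈ E, κ e * ε := by
        refine Finset.sum_le_sum fun e he => mul_le_mul_of_nonneg_left ?_ (hκ0 e)
        calc ∑ k, |ξ e.2 k - ξ e.1 k| = ∑ k, |ξ e.1 k - ξ e.2 k| :=
              Finset.sum_congr rfl fun k _ => abs_sub_comm _ _
          _ ≤ ε := hvar e he
    _ ≤ ε := by
        rw [← Finset.sum_mul]
        exact mul_le_of_le_one_left hε hκ1
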